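/- Let s : (α, π) → ℝ be differentiable with s' + s² + r = 0, r continuous, r ≥ 1, where α ∈ [0, π), and suppose s extends continuously to α with s(α) ≤ cot(α) (this condition being vacuous if α = 0). Then s(t) = cot(t) for all t ∈ (α, π), and consequently r(t) = 1 for all t ∈ (α, π). -/

import Mathlib

open Real Set Filter

/-- For `x ∈ (0, π)`, `arctan (cot x) = π/2 - x`. -/
lemma arctan_cot_aux {x : ℝ} (h0 : 0 < x) (hπ : x < π) :
    Real.arctan (Real.cot x) = π / 2 - x := by
  have hcot : Real.cot x = Real.tan (π / 2 - x) := by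
    rw [Real.tan_pi_div_two_sub, Real.cot_eq_cos_div_sin, Real.tan_eq_sin_div_cos, inv_div]
  rw [hcot, Real.arctan_tan (by linarith) (by linarith)]

/-- Scalar infinitesimal maximal diameter theorem: a solution of `s' + s² + r = 0` on
`(α, π)` with `r ≥ 1` continuous, which (when `α ≠ 0`) extends continuously to `α` with
boundary value `≤ cot α`, must be `cot`, and then `r ≡ 1`. -/
theorem stmt_6 (α : ℝ) (hα : α ∈ Set.Ico 0 π) (s r : ℝ → ℝ)
    (hs : ∀ t ∈ Set.Ioo α π, HasDerivAt s (-(s t ^ 2 + r t)) t)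
    (hrc : ContinuousOn r (Set.Ioo α π))
    (hr : ∀ t ∈ Set.Ioo α π, 1 ≤ r t)
    (hbd : α ≠ 0 → ∃ L, Filter.Tendsto s (nhdsWithin α (Set.Ioi α)) (nhds L) ∧
      L ≤ Real.cot α) :
    ∀ t ∈ Set.Ioo α π, s t = Real.cot t ∧ r t = 1 := by
  obtain ⟨hα0, hαπ⟩ := hα
  set g : ℝ → ℝ → ℝ := fun c t => s t * sin (t - c) ^ 2 - cos (t - c) * sin (t - c)
    with hg_def
  -- derivative formula for the comparison function
  have hgd : ∀ c : ℝ, ∀ t ∈ Set.Ioo α π, HasDerivAt (g c)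
      (-(s t * sin (t - c) - cos (t - c)) ^ 2 - (r t - 1) * sin (t - c) ^ 2) t := by
    intro c t ht
    have h1 : HasDerivAt (fun u : ℝ => u - c) 1 t := (hasDerivAt_id t).sub_const c
    have hsin : HasDerivAt (fun u : ℝ => sin (u - c)) (cos (t - c)) t := by
      simpa using h1.sin
    have hcos : HasDerivAt (fun u : ℝ => cos (u - c)) (-sin (t - c)) t := by
      simpa using h1.cos
    have h2 := ((hs t ht).mul (hsin.pow 2)).sub (hcos.mul hsin)
    refine h2.congr_deriv ?_
    simp only [Pi.pow_apply, Nat.cast_ofNat, Nat.add_one_sub_one, pow_one]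
    ring
  -- g c is antitone on (α, π)
  have hanti : ∀ c : ℝ, AntitoneOn (g c) (Set.Ioo α π) := by
    intro c
    apply antitoneOn_of_deriv_nonpos (convex_Ioo α π)
    · intro x hx
      exact (hgd c x hx).continuousAt.continuousWithinAt
    · intro x hx
      rw [interior_Ioo] at hx
      exact (hgd c x hx).differentiableAt.differentiableWithinAt
    · intro x hx
      rw [interior_Ioo] at hx
      rw [(hgd c x hx).deriv]
      have h1 := hr x hx
      nlinarith [sq_nonneg (s x * sin (x - c) - cos (x - c)), sq_nonneg (sin (x - c))]
  have hkey : ∀ t₀ ∈ Set.Ioo α π, s t₀ = Real.cot t₀ := by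
   intro t₀ ht₀
   have ht₀0 : 0 < t₀ := lt_of_le_of_lt hα0 ht₀.1
   have hsin₀ : 0 < sin t₀ := Real.sin_pos_of_pos_of_lt_pi ht₀0 ht₀.2
   -- evaluation of g with shift
   have hgev : ∀ c t : ℝ, g c t = s t * sin (t - c) ^ 2 - cos (t - c) * sin (t - c) := by
     intro c t; rfl
   -- Case (b): not s t₀ < cot t₀
   have hge : ¬ s t₀ < Real.cot t₀ := by
     intro h
     set m : ℝ := (s t₀ + Real.cot t₀) / 2 with hm
     set a : ℝ := Real.arctan m with ha
     set θ : ℝ := π / 2 - a with hθ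
     have hma : a < π / 2 - t₀ := by
       rw [← arctan_cot_aux ht₀0 ht₀.2]
       exact Real.arctan_strictMono (by linarith)
     have haπ : -(π / 2) < a := Real.neg_pi_div_two_lt_arctan m
     have hθt₀ : t₀ < θ := by simp only [hθ]; linarith
     have hθπ : θ < π := by simp only [hθ]; linarith
     have hca : 0 < cos a := Real.cos_arctan_pos m
     have hsa : sin a = m * cos a := by
       have := Real.tan_arctan m
       rw [Real.tan_eq_sin_div_cos] at this
       field_simp [hca.ne'] at this ⊢
       linarith [this]
     set c : ℝ := t₀ - θ with hc
     have hmem1 : t₀ ∈ Set.Ioo α π := ht₀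
     have hmem2 : π + c ∈ Set.Ioo α π := by
       constructor
       · have : t₀ < π + c := by simp only [hc]; linarith
         linarith [ht₀.1]
       · simp only [hc]; linarith
     have hmono := hanti c hmem1 hmem2 (by simp only [hc]; linarith)
     have hv2 : g c (π + c) = 0 := by
       rw [hgev]
       simp [show π + c - c = π by ring]
     have hv1 : g c t₀ < 0 := by
       rw [hgev]
       have ht : t₀ - c = θ := by simp [hc]
       rw [ht, hθ, Real.sin_pi_div_two_sub, Real.cos_pi_div_two_sub, hsa]
       have hs₀m : s t₀ < m := by simp only [hm]; linarith
       nlinarith [mul_pos (sub_pos.2 hs₀m) (mul_pos hca hca)]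
     linarith [hmono, hv1, hv2]
   -- Case (a): not cot t₀ < s t₀
   have hle : ¬ Real.cot t₀ < s t₀ := by
     intro h
     set m : ℝ := (s t₀ + Real.cot t₀) / 2 with hm
     set a : ℝ := Real.arctan m with ha
     set θ : ℝ := π / 2 - a with hθ
     have hca : 0 < cos a := Real.cos_arctan_pos m
     have hsa : sin a = m * cos a := by
       have := Real.tan_arctan m
       rw [Real.tan_eq_sin_div_cos] at this
       field_simp [hca.ne'] at this ⊢
       linarith [this]
     have hs₀m : m < s t₀ := by simp only [hm]; linarith
     by_cases hα' : α = 0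
     · -- interior comparison point at c
       have hma : π / 2 - t₀ < a := by
         rw [← arctan_cot_aux ht₀0 ht₀.2]
         exact Real.arctan_strictMono (by linarith)
       have haπ : a < π / 2 := Real.arctan_lt_pi_div_two m
       have hθ0 : 0 < θ := by simp only [hθ]; linarith
       have hθt₀ : θ < t₀ := by simp only [hθ]; linarith
       set c : ℝ := t₀ - θ with hc
       have hmemc : c ∈ Set.Ioo α π := by
         constructor
         · rw [hα']; simp only [hc]; linarith
         · simp only [hc]; linarith [ht₀.2]
       have hmono := hanti c hmemc ht₀ (by simp only [hc]; linarith)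
       have hv2 : g c c = 0 := by rw [hgev]; simp
       have hv1 : 0 < g c t₀ := by
         rw [hgev]
         have ht : t₀ - c = θ := by simp [hc]
         rw [ht, hθ, Real.sin_pi_div_two_sub, Real.cos_pi_div_two_sub, hsa]
         nlinarith [mul_pos (sub_pos.2 hs₀m) (mul_pos hca hca)]
       linarith [hmono, hv1, hv2]
     · -- use the boundary condition at α
       obtain ⟨L, hL, hLle⟩ := hbd hα'
       have hα0' : 0 < α := lt_of_le_of_ne hα0 (Ne.symm hα')
       have hsinα : 0 < sin α := Real.sin_pos_of_pos_of_lt_pi hα0' hαπ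
       have hv1 : 0 < g 0 t₀ := by
         rw [hgev]
         have hcot : Real.cot t₀ = cos t₀ / sin t₀ := Real.cot_eq_cos_div_sin t₀
         rw [hcot] at h
         rw [div_lt_iff₀ hsin₀] at h
         simp only [sub_zero]
         nlinarith
       have hten : Tendsto (g 0) (nhdsWithin α (Set.Ioi α))
           (nhds (L * sin α ^ 2 - cos α * sin α)) := by
         apply Tendsto.sub
         · exact hL.mul (((Real.continuous_sin.pow 2).tendsto α).mono_left
             nhdsWithin_le_nhds |>.congr (by intro x; simp))
         · exact ((Real.continuous_cos.mul Real.continuous_sin).tendsto α).mono_left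
             nhdsWithin_le_nhds |>.congr (by intro x; simp)
       have hev : ∀ᶠ t in nhdsWithin α (Set.Ioi α), g 0 t₀ ≤ g 0 t := by
         filter_upwards [Ioo_mem_nhdsGT ht₀.1] with t ht
         exact hanti 0 ⟨ht.1, ht.2.trans ht₀.2⟩ ht₀ ht.2.le
       have hlim : g 0 t₀ ≤ L * sin α ^ 2 - cos α * sin α := ge_of_tendsto hten hev
       have hLle' : L * sin α ≤ cos α := by
         rw [Real.cot_eq_cos_div_sin, le_div_iff₀ hsinα] at hLle
         exact hLle
       nlinarith
   exact le_antisymm (not_lt.1 hle) (not_lt.1 hge)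
  intro t₀ ht₀
  refine ⟨hkey t₀ ht₀, ?_⟩
  have hsin₀ : sin t₀ ≠ 0 :=
    (Real.sin_pos_of_pos_of_lt_pi (lt_of_le_of_lt hα0 ht₀.1) ht₀.2).ne'
  have heq : s =ᶠ[nhds t₀] Real.cot := by
    filter_upwards [(isOpen_Ioo).mem_nhds ht₀] with t ht using hkey t ht
  have hcotfun : Real.cot = fun x : ℝ => cos x / sin x := by
    funext x; exact Real.cot_eq_cos_div_sin x
  have hcot : HasDerivAt Real.cot
      ((-sin t₀ * sin t₀ - cos t₀ * cos t₀) / sin t₀ ^ 2) t₀ := by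
    rw [hcotfun]
    exact (Real.hasDerivAt_cos t₀).div (Real.hasDerivAt_sin t₀) hsin₀
  have hs' : HasDerivAt s ((-sin t₀ * sin t₀ - cos t₀ * cos t₀) / sin t₀ ^ 2) t₀ :=
    hcot.congr_of_eventuallyEq heq
  have huniq := (hs t₀ ht₀).unique hs'
  have hst : s t₀ = cos t₀ / sin t₀ := by rw [hkey t₀ ht₀, Real.cot_eq_cos_div_sin]
  have hpy : sin t₀ ^ 2 + cos t₀ ^ 2 = 1 := Real.sin_sq_add_cos_sq t₀
  rw [hst] at huniq
  field_simp at huniq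
  have h2 : (r t₀ - 1) * sin t₀ ^ 2 = 0 := by linear_combination -huniq
  rcases mul_eq_zero.1 h2 with h3 | h3
  · linarith
  · exact absurd h3 (pow_ne_zero 2 hsin₀)
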